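/- Let q ∈ (1,2]. There exists a constant c_q > 0, depending only on q and s, such that for every summable f : ℤ → ℝ with f ≥ 0 and every x ∈ ℤ, (f(x+1) − f(x))² ≤ c_q · ( Γ_q(f)(x+1) + Γ_q(f)(x) ). -/

import Mathlib

open MeasureTheory Real

/-- The kernel `K_s` of the fractional discrete Laplacian on `ℤ`. -/
noncomputable def Ker (s : ℝ) (m : ℤ) : ℝ :=
  if m = 0 then 0
  else ((4 : ℝ) ^ s * Real.Gamma (1 / 2 + s) / (Real.sqrt Real.pi * |Real.Gamma (-s)|)) *
    (Real.Gamma ((m.natAbs : ℝ) - s) / Real.Gamma ((m.natAbs : ℝ) + 1 + s))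

/-- The fractional discrete Laplacian `L = (-Δ)^s` acting pointwise. -/
noncomputable def Lop (s : ℝ) (f : ℤ → ℝ) : ℤ → ℝ :=
  fun x => ∑' y : ℤ, (f x - f y) * Ker s (x - y)

/-- The heat semigroup `P_t = exp (-t L)`, given by the exponential series of the
bounded operator `-tL` (evaluated pointwise). -/
noncomputable def heat (s t : ℝ) (f : ℤ → ℝ) : ℤ → ℝ :=
  fun x => ∑' n : ℕ, ((-t) ^ n / (n.factorial : ℝ)) * ((Lop s)^[n] f x)

/-- The squared modulus of the gradient, `|∇f|²(x) = Σ_y K_s(y-x) (f x - f y)²`. -/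
noncomputable def gradSq (s : ℝ) (f : ℤ → ℝ) (x : ℤ) : ℝ :=
  ∑' y : ℤ, Ker s (y - x) * (f x - f y) ^ 2

/-- The squared modulus of the modified gradient,
`|∇̃f|²(x) = Σ_{y : |f y| < |f x|} K_s(y-x) (f x - f y)²`. -/
noncomputable def mgradSq (s : ℝ) (f : ℤ → ℝ) (x : ℤ) : ℝ :=
  ∑' y : {y : ℤ // |f y| < |f x|}, Ker s ((y : ℤ) - x) * (f x - f (y : ℤ)) ^ 2

/-- The `ℓ^q` norm on `ℤ` with counting measure (for finite `q`). -/
noncomputable def lqNorm (q : ℝ) (f : ℤ → ℝ) : ℝ :=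
  (∑' x : ℤ, |f x| ^ q) ^ (1 / q)

/-- The pseudo-gradient `Γ_q(f) = q f · L f - f^{2-q} · L (f^q)` (real powers). -/
noncomputable def GammaQ (s q : ℝ) (f : ℤ → ℝ) : ℤ → ℝ :=
  fun x => q * f x * Lop s f x - f x ^ (2 - q) * Lop s (fun y => f y ^ q) x

/-! ### Auxiliary lemmas on the kernel -/

lemma ker_const_pos {s : ℝ} (hs0 : 0 < s) (hs1 : s < 1) :
    0 < (4 : ℝ) ^ s * Real.Gamma (1 / 2 + s) / (Real.sqrt Real.pi * |Real.Gamma (-s)|) := by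
  apply div_pos
  · exact mul_pos (Real.rpow_pos_of_pos (by norm_num) s)
      (Real.Gamma_pos_of_pos (by linarith))
  · apply mul_pos (Real.sqrt_pos.2 Real.pi_pos)
    rw [abs_pos]
    apply Real.Gamma_ne_zero
    intro m
    rcases m with - | m
    · simpa using hs0.ne'
    · intro h
      have h2 : s = (m : ℝ) + 1 := by push_cast at h ⊢; linarith
      have h3 : (0:ℝ) ≤ (m:ℝ) := Nat.cast_nonneg m
      linarith

lemma Ker_pos {s : ℝ} (hs0 : 0 < s) (hs1 : s < 1) {m : ℤ} (hm : m ≠ 0) : 0 < Ker s m := by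
  unfold Ker
  rw [if_neg hm]
  apply mul_pos (ker_const_pos hs0 hs1)
  have h1 : (1:ℝ) ≤ (m.natAbs : ℝ) := by
    have := Int.natAbs_pos.2 hm
    exact_mod_cast this
  exact div_pos (Real.Gamma_pos_of_pos (by linarith)) (Real.Gamma_pos_of_pos (by linarith))

lemma Ker_nonneg {s : ℝ} (hs0 : 0 < s) (hs1 : s < 1) (m : ℤ) : 0 ≤ Ker s m := by
  rcases eq_or_ne m 0 with rfl | hm
  · simp [Ker]
  · exact (Ker_pos hs0 hs1 hm).le

lemma Ker_neg_eq {s : ℝ} (m : ℤ) : Ker s (-m) = Ker s m := by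
  simp [Ker, Int.natAbs_neg, neg_eq_zero]

lemma gamma_ratio_summable {s : ℝ} (hs0 : 0 < s) (hs1 : s < 1) :
    Summable (fun n : ℕ =>
      Real.Gamma ((n : ℝ) + 1 - s) / Real.Gamma ((n : ℝ) + 1 + 1 + s)) := by
  set A : ℕ → ℝ := fun n => Real.Gamma ((n : ℝ) + 1 - s) / Real.Gamma ((n : ℝ) + 1 + s) with hA
  have hApos : ∀ n, 0 < A n := by
    intro n
    have hn : (0:ℝ) ≤ (n:ℝ) := Nat.cast_nonneg n
    exact div_pos (Real.Gamma_pos_of_pos (by linarith)) (Real.Gamma_pos_of_pos (by linarith))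
  have hBpos : ∀ n : ℕ, 0 ≤ Real.Gamma ((n : ℝ) + 1 - s) / Real.Gamma ((n : ℝ) + 1 + 1 + s) := by
    intro n
    have hn : (0:ℝ) ≤ (n:ℝ) := Nat.cast_nonneg n
    exact (div_pos (Real.Gamma_pos_of_pos (by linarith)) (Real.Gamma_pos_of_pos (by linarith))).le
  have key : ∀ n : ℕ,
      Real.Gamma ((n : ℝ) + 1 - s) / Real.Gamma ((n : ℝ) + 1 + 1 + s)
        = (A n - A (n + 1)) / (2 * s) := by
    intro n
    have hn : (0:ℝ) ≤ (n:ℝ) := Nat.cast_nonneg n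
    have h1 : ((n:ℝ) + 1 - s) ≠ 0 := by linarith
    have h2 : ((n:ℝ) + 1 + s) ≠ 0 := by positivity
    have e1 : ((n + 1 : ℕ) : ℝ) + 1 - s = ((n:ℝ) + 1 - s) + 1 := by push_cast; ring
    have e2 : ((n + 1 : ℕ) : ℝ) + 1 + s = ((n:ℝ) + 1 + s) + 1 := by push_cast; ring
    have hG1 : (0:ℝ) < Real.Gamma ((n:ℝ) + 1 + s) := Real.Gamma_pos_of_pos (by linarith)
    rw [hA]
    simp only
    rw [e1, e2, Real.Gamma_add_one h1, Real.Gamma_add_one h2]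
    have e3 : (n:ℝ) + 1 + 1 + s = ((n:ℝ) + 1 + s) + 1 := by ring
    rw [e3, Real.Gamma_add_one h2]
    field_simp
    ring
  have hbound : ∀ n : ℕ, ∑ i ∈ Finset.range n,
      Real.Gamma ((i : ℝ) + 1 - s) / Real.Gamma ((i : ℝ) + 1 + 1 + s) ≤ A 0 / (2 * s) := by
    intro n
    have he : ∑ i ∈ Finset.range n,
        Real.Gamma ((i : ℝ) + 1 - s) / Real.Gamma ((i : ℝ) + 1 + 1 + s)
        = (A 0 - A n) / (2 * s) := by
      rw [Finset.sum_congr rfl (fun i _ => key i), ← Finset.sum_div,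
        Finset.sum_range_sub' A n]
    rw [he]
    have h1 := (hApos n).le
    have h2s : (0:ℝ) < 2 * s := by linarith
    gcongr
    linarith
  exact summable_of_sum_range_le hBpos hbound

lemma Ker_summable {s : ℝ} (hs0 : 0 < s) (hs1 : s < 1) : Summable (Ker s) := by
  set C : ℝ := (4 : ℝ) ^ s * Real.Gamma (1 / 2 + s) / (Real.sqrt Real.pi * |Real.Gamma (-s)|)
    with hC
  have hN : Summable (fun n : ℕ => Ker s (↑(n + 1))) := by
    have he : (fun n : ℕ => Ker s (↑(n + 1)))
        = fun n : ℕ => C * (Real.Gamma ((n : ℝ) + 1 - s) / Real.Gamma ((n : ℝ) + 1 + 1 + s)) := by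
      funext n
      have hne : ((n + 1 : ℕ) : ℤ) ≠ 0 := by positivity
      rw [Ker, if_neg hne]
      have hab : ((n + 1 : ℕ) : ℤ).natAbs = n + 1 := Int.natAbs_natCast _
      rw [hab, hC]
      push_cast
      ring_nf
    rw [he]
    exact (gamma_ratio_summable hs0 hs1).mul_left C
  have hNat : Summable (fun n : ℕ => Ker s ↑n) := by
    refine (summable_nat_add_iff 1).1 ?_
    exact hN
  have hNeg : Summable (fun n : ℕ => Ker s (-(↑n + 1))) := by
    have he : (fun n : ℕ => Ker s (-(↑n + 1))) = fun n : ℕ => Ker s (↑(n + 1)) := by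
      funext n
      rw [show (-(↑n + 1) : ℤ) = -(↑(n + 1)) by push_cast; ring, Ker_neg_eq]
    rw [he]
    exact hN
  exact Summable.of_nat_of_neg_add_one hNat hNeg

/-! ### Pointwise convexity inequalities -/

lemma bern_lower {q t : ℝ} (hq : 1 ≤ q) (ht : 0 ≤ t) : 1 + q * (t - 1) ≤ t ^ q := by
  have := one_add_mul_self_le_rpow_one_add (s := t - 1) (by linarith) hq
  simpa using this

lemma bern_upper {p t : ℝ} (hp0 : 0 ≤ p) (hp1 : p ≤ 1) (ht : 0 ≤ t) :
    t ^ p ≤ 1 + p * (t - 1) := by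
  have := rpow_one_add_le_one_add_mul_self (s := t - 1) (by linarith) hp0 hp1
  simpa using this

lemma rpow_split {a : ℝ} (ha : 0 < a) (q : ℝ) : a ^ (2 - q) * a ^ q = a ^ 2 := by
  rw [← Real.rpow_add ha, show (2 - q) + q = ((2:ℕ):ℝ) by norm_num, Real.rpow_natCast]

/-- strong convexity bound on `[0,1]` -/
lemma key1 {q : ℝ} (hq1 : 1 < q) (hq2 : q ≤ 2) {t : ℝ} (ht0 : 0 ≤ t) (ht1 : t ≤ 1) :
    q * (q - 1) / 2 * (1 - t) ^ 2 ≤ t ^ q - 1 - q * (t - 1) := by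
  set F : ℝ → ℝ := fun t => t ^ q - 1 - q * (t - 1) - q * (q - 1) / 2 * (1 - t) ^ 2 with hFdef
  have hF : ∀ t : ℝ, HasDerivAt F (q * t ^ (q - 1) - q + q * (q - 1) * (1 - t)) t := by
    intro t
    have h0 : HasDerivAt (fun t : ℝ => 1 - t) (-1) t := by
      simpa using (hasDerivAt_id t).const_sub 1
    have h1 : HasDerivAt (fun t : ℝ => (1 - t) ^ 2) (↑2 * (1 - t) ^ (2 - 1) * (-1)) t :=
      h0.pow 2
    have h2 : HasDerivAt (fun t : ℝ => t ^ q) (q * t ^ (q - 1)) t :=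
      Real.hasDerivAt_rpow_const (Or.inr hq1.le)
    have h3 : HasDerivAt (fun t : ℝ => q * (t - 1)) (q * 1) t :=
      ((hasDerivAt_id t).sub_const 1).const_mul q
    have := ((h2.sub_const 1).sub h3).sub (h1.const_mul (q * (q - 1) / 2))
    refine this.congr_deriv ?_
    push_cast
    ring
  have hdiff : Differentiable ℝ F := fun t => (hF t).differentiableAt
  have hanti : AntitoneOn F (Set.Icc 0 1) := by
    apply antitoneOn_of_deriv_nonpos (convex_Icc 0 1) hdiff.continuous.continuousOn
      (fun x _ => (hdiff x).differentiableWithinAt)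
    intro x hx
    rw [interior_Icc] at hx
    rw [(hF x).deriv]
    have hb := bern_upper (p := q - 1) (by linarith) (by linarith) hx.1.le
    nlinarith [hq1]
  have h1F : F 1 = 0 := by simp [hFdef, Real.one_rpow]
  have := hanti (Set.mem_Icc.2 ⟨ht0, ht1⟩) (Set.mem_Icc.2 ⟨zero_le_one, le_refl 1⟩) ht1
  rw [h1F] at this
  simp only [hFdef] at this
  linarith

lemma g_nonneg {q a b : ℝ} (hq1 : 1 < q) (hq2 : q ≤ 2) (ha : 0 ≤ a) (hb : 0 ≤ b) :
    0 ≤ q * a * (a - b) - a ^ (2 - q) * (a ^ q - b ^ q) := by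
  rcases ha.eq_or_lt with rfl | ha'
  · have e : q * (0:ℝ) * (0 - b) - (0:ℝ) ^ (2 - q) * ((0:ℝ) ^ q - b ^ q)
        = (0:ℝ) ^ (2 - q) * b ^ q := by
      rw [Real.zero_rpow (show q ≠ 0 by linarith)]
      ring
    rw [e]
    exact mul_nonneg (Real.rpow_nonneg le_rfl _) (Real.rpow_nonneg hb _)
  · set t : ℝ := b / a with htdef
    have ht0 : 0 ≤ t := div_nonneg hb ha'.le
    have hbt : b = a * t := by rw [htdef]; field_simp
    have hbq : b ^ q = a ^ q * t ^ q := by rw [hbt, Real.mul_rpow ha'.le ht0]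
    have hsplit := rpow_split ha' q
    have e : q * a * (a - b) - a ^ (2 - q) * (a ^ q - b ^ q)
        = a ^ 2 * (t ^ q - 1 - q * (t - 1)) := by
      rw [hbq]
      rw [hbt]
      linear_combination (t ^ q - 1) * hsplit
    rw [e]
    have := bern_lower hq1.le ht0
    have h2 : (0:ℝ) ≤ a ^ 2 := sq_nonneg a
    nlinarith

lemma g_strong {q a b : ℝ} (hq1 : 1 < q) (hq2 : q ≤ 2) (hb : 0 ≤ b) (hba : b ≤ a) :
    q * (q - 1) / 2 * (a - b) ^ 2 ≤ q * a * (a - b) - a ^ (2 - q) * (a ^ q - b ^ q) := by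
  rcases (hb.trans hba).eq_or_lt with rfl | ha'
  · have hb0 : b = 0 := le_antisymm hba hb
    subst hb0
    simp
  · set t : ℝ := b / a with htdef
    have ht0 : 0 ≤ t := div_nonneg hb ha'.le
    have ht1 : t ≤ 1 := (div_le_one ha').2 hba
    have hbt : b = a * t := by rw [htdef]; field_simp
    have hbq : b ^ q = a ^ q * t ^ q := by rw [hbt, Real.mul_rpow ha'.le ht0]
    have hsplit := rpow_split ha' q
    have e : q * a * (a - b) - a ^ (2 - q) * (a ^ q - b ^ q)
        = a ^ 2 * (t ^ q - 1 - q * (t - 1)) := by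
      rw [hbq]
      rw [hbt]
      linear_combination (t ^ q - 1) * hsplit
    have e2 : (a - b) ^ 2 = a ^ 2 * (1 - t) ^ 2 := by rw [hbt]; ring
    rw [e, e2]
    have hk := key1 hq1 hq2 ht0 ht1
    have h2 : (0:ℝ) ≤ a ^ 2 := sq_nonneg a
    nlinarith

/-! ### Summability of the relevant families -/

lemma summable_ker_shift {s : ℝ} (hs0 : 0 < s) (hs1 : s < 1) (x : ℤ) :
    Summable (fun y : ℤ => Ker s (x - y)) :=
  (Ker_summable hs0 hs1).comp_injective sub_right_injective

lemma summable_mul_ker {s : ℝ} (hs0 : 0 < s) (hs1 : s < 1) {g : ℤ → ℝ}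
    (hg : Summable g) (hg0 : ∀ y, 0 ≤ g y) (x : ℤ) :
    Summable (fun y : ℤ => g y * Ker s (x - y)) := by
  refine Summable.of_nonneg_of_le
    (fun y => mul_nonneg (hg0 y) (Ker_nonneg hs0 hs1 _))
    (fun y => ?_) (hg.mul_right (∑' m : ℤ, Ker s m))
  exact mul_le_mul_of_nonneg_left
    (Summable.le_tsum (Ker_summable hs0 hs1) (x - y) (fun j _ => Ker_nonneg hs0 hs1 j)) (hg0 y)

lemma summable_Lop_term {s : ℝ} (hs0 : 0 < s) (hs1 : s < 1) {g : ℤ → ℝ}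
    (hg : Summable g) (hg0 : ∀ y, 0 ≤ g y) (x : ℤ) :
    Summable (fun y : ℤ => (g x - g y) * Ker s (x - y)) := by
  have he : (fun y : ℤ => (g x - g y) * Ker s (x - y))
      = fun y : ℤ => g x * Ker s (x - y) - g y * Ker s (x - y) := by
    funext y; ring
  rw [he]
  exact ((summable_ker_shift hs0 hs1 x).mul_left (g x)).sub (summable_mul_ker hs0 hs1 hg hg0 x)

lemma summable_rpow {q : ℝ} (hq1 : 1 < q) {f : ℤ → ℝ} (hf : Summable f)
    (hf0 : ∀ y, 0 ≤ f y) : Summable (fun y : ℤ => f y ^ q) := by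
  set M : ℝ := ∑' y : ℤ, f y with hM
  have hM0 : 0 ≤ M := tsum_nonneg hf0
  have hbound : ∀ y, f y ^ q ≤ (M + 1) ^ (q - 1) * f y := by
    intro y
    rcases (hf0 y).eq_or_lt with h | h
    · rw [← h, Real.zero_rpow (show q ≠ 0 by linarith), mul_zero]
    · have hfy : f y ≠ 0 := h.ne'
      have hle : f y ≤ M + 1 := by
        have := Summable.le_tsum hf y (fun j _ => hf0 j)
        linarith
      calc f y ^ q = f y ^ (q - 1) * f y := by
            have h1 := Real.rpow_add_one hfy (q - 1)
            rw [show (q - 1) + 1 = q by ring] at h1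
            rw [h1]
        _ ≤ (M + 1) ^ (q - 1) * f y :=
            mul_le_mul_of_nonneg_right
              (Real.rpow_le_rpow (hf0 y) hle (by linarith)) (hf0 y)
  exact Summable.of_nonneg_of_le (fun y => Real.rpow_nonneg (hf0 y) q) hbound
    (hf.mul_left ((M + 1) ^ (q - 1)))

/-! ### Expansion of `Γ_q` as a sum of nonnegative terms -/

lemma summable_gterm {s q : ℝ} (hs0 : 0 < s) (hs1 : s < 1) (hq1 : 1 < q)
    {f : ℤ → ℝ} (hf : Summable f) (hf0 : ∀ y, 0 ≤ f y) (x : ℤ) :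
    Summable (fun y : ℤ => Ker s (x - y) *
      (q * f x * (f x - f y) - f x ^ (2 - q) * (f x ^ q - f y ^ q))) := by
  have h1 := (summable_Lop_term hs0 hs1 hf hf0 x).mul_left (q * f x)
  have h2 := (summable_Lop_term hs0 hs1 (g := fun y => f y ^ q)
    (summable_rpow hq1 hf hf0) (fun y => Real.rpow_nonneg (hf0 y) q) x).mul_left
    (f x ^ (2 - q))
  have he : (fun y : ℤ => Ker s (x - y) *
      (q * f x * (f x - f y) - f x ^ (2 - q) * (f x ^ q - f y ^ q)))
      = fun y : ℤ => q * f x * ((f x - f y) * Ker s (x - y))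
        - f x ^ (2 - q) * ((f x ^ q - f y ^ q) * Ker s (x - y)) := by
    funext y; ring
  rw [he]
  exact h1.sub h2

lemma GammaQ_eq {s q : ℝ} (hs0 : 0 < s) (hs1 : s < 1) (hq1 : 1 < q)
    {f : ℤ → ℝ} (hf : Summable f) (hf0 : ∀ y, 0 ≤ f y) (x : ℤ) :
    GammaQ s q f x = ∑' y : ℤ, Ker s (x - y) *
      (q * f x * (f x - f y) - f x ^ (2 - q) * (f x ^ q - f y ^ q)) := by
  have h1 := summable_Lop_term hs0 hs1 hf hf0 x
  have h2 := summable_Lop_term hs0 hs1 (g := fun y => f y ^ q)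
    (summable_rpow hq1 hf hf0) (fun y => Real.rpow_nonneg (hf0 y) q) x
  unfold GammaQ Lop
  rw [← tsum_mul_left, ← tsum_mul_left,
    ← Summable.tsum_sub (h1.mul_left (q * f x)) (h2.mul_left (f x ^ (2 - q)))]
  exact tsum_congr fun y => by ring

lemma GammaQ_nonneg {s q : ℝ} (hs0 : 0 < s) (hs1 : s < 1) (hq1 : 1 < q) (hq2 : q ≤ 2)
    {f : ℤ → ℝ} (hf : Summable f) (hf0 : ∀ y, 0 ≤ f y) (x : ℤ) :
    0 ≤ GammaQ s q f x := by
  rw [GammaQ_eq hs0 hs1 hq1 hf hf0 x]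
  exact tsum_nonneg fun y => mul_nonneg (Ker_nonneg hs0 hs1 _)
    (g_nonneg hq1 hq2 (hf0 x) (hf0 y))

lemma GammaQ_ge_term {s q : ℝ} (hs0 : 0 < s) (hs1 : s < 1) (hq1 : 1 < q) (hq2 : q ≤ 2)
    {f : ℤ → ℝ} (hf : Summable f) (hf0 : ∀ y, 0 ≤ f y) (x y : ℤ) :
    Ker s (x - y) * (q * f x * (f x - f y) - f x ^ (2 - q) * (f x ^ q - f y ^ q))
      ≤ GammaQ s q f x := by
  rw [GammaQ_eq hs0 hs1 hq1 hf hf0 x]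
  exact Summable.le_tsum (summable_gterm hs0 hs1 hq1 hf hf0 x) y
    (fun j _ => mul_nonneg (Ker_nonneg hs0 hs1 _) (g_nonneg hq1 hq2 (hf0 x) (hf0 j)))

/-- The difference operator is controlled pointwise by the pseudo-gradient:
there is `c_q > 0` (depending only on `q` and `s`) with
`(f (x+1) - f x)² ≤ c_q (Γ_q(f)(x+1) + Γ_q(f)(x))`. -/
theorem diff_sq_le_gammaQ (s : ℝ) (hs : s ∈ Set.Ioo (0 : ℝ) 1) (q : ℝ)
    (hq : q ∈ Set.Ioc (1 : ℝ) 2) :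
    ∃ c : ℝ, 0 < c ∧ ∀ f : ℤ → ℝ, Summable f → (∀ x, 0 ≤ f x) → ∀ x : ℤ,
      (f (x + 1) - f x) ^ 2 ≤ c * (GammaQ s q f (x + 1) + GammaQ s q f x) := by
  obtain ⟨hs0, hs1⟩ := hs
  obtain ⟨hq1, hq2⟩ := hq
  have hK1 : 0 < Ker s 1 := Ker_pos hs0 hs1 one_ne_zero
  have hqq : 0 < q * (q - 1) := mul_pos (by linarith) (by linarith)
  refine ⟨2 / (Ker s 1 * (q * (q - 1))), by positivity, ?_⟩
  intro f hf hf0 x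
  have hmain : Ker s 1 * (q * (q - 1) / 2 * (f (x + 1) - f x) ^ 2)
      ≤ GammaQ s q f (x + 1) + GammaQ s q f x := by
    rcases le_total (f x) (f (x + 1)) with hba | hab
    · have h1 := GammaQ_ge_term hs0 hs1 hq1 hq2 hf hf0 (x + 1) x
      rw [show x + 1 - x = (1 : ℤ) by ring] at h1
      have h2 := g_strong (a := f (x + 1)) (b := f x) hq1 hq2 (hf0 x) hba
      have h3 := GammaQ_nonneg hs0 hs1 hq1 hq2 hf hf0 x
      nlinarith [mul_le_mul_of_nonneg_left h2 hK1.le]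
    · have h1 := GammaQ_ge_term hs0 hs1 hq1 hq2 hf hf0 x (x + 1)
      rw [show x - (x + 1) = (-1 : ℤ) by ring, show (-1 : ℤ) = -(1 : ℤ) by ring,
        Ker_neg_eq] at h1
      have h2 := g_strong (a := f x) (b := f (x + 1)) hq1 hq2 (hf0 (x + 1)) hab
      have h3 := GammaQ_nonneg hs0 hs1 hq1 hq2 hf hf0 (x + 1)
      have hsq : (f (x + 1) - f x) ^ 2 = (f x - f (x + 1)) ^ 2 := by ring
      nlinarith [mul_le_mul_of_nonneg_left h2 hK1.le]
  have hcK : 0 < Ker s 1 * (q * (q - 1)) := by positivity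
  have e : 2 / (Ker s 1 * (q * (q - 1)))
      * (Ker s 1 * (q * (q - 1) / 2 * (f (x + 1) - f x) ^ 2))
      = (f (x + 1) - f x) ^ 2 := by
    field_simp
  calc (f (x + 1) - f x) ^ 2
      = 2 / (Ker s 1 * (q * (q - 1)))
        * (Ker s 1 * (q * (q - 1) / 2 * (f (x + 1) - f x) ^ 2)) := e.symm
    _ ≤ 2 / (Ker s 1 * (q * (q - 1))) * (GammaQ s q f (x + 1) + GammaQ s q f x) := by
        apply mul_le_mul_of_nonneg_left hmain
        positivity
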